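/- CI implication (I:13): let ξ_X, ξ_Y, ξ_Z, ξ_U be discrete random variables with nonempty finite ranges on a common probability space. If ξ_X ⊥ ξ_Y (unconditional independence), ξ_X ⊥ ξ_Y | ξ_Z, ξ_X ⊥ ξ_Y | ξ_U, and ξ_Z ⊥ ξ_U | (ξ_X, ξ_Y), then ξ_X ⊥ ξ_Y | (ξ_Z, ξ_U). -/

import Mathlib

open MeasureTheory

/-- The probability that the discrete random variable `f` takes the value `x`. -/
noncomputable def probOf {Ω S : Type*} [MeasurableSpace Ω] (μ : Measure Ω)
    (f : Ω → S) (x : S) : ℝ :=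
  (μ {ω | f ω = x}).toReal

/-- The Shannon entropy `−Σ_x p(x)·ln p(x)` of the distribution of a discrete
random variable `f` with finite range `S`. -/
noncomputable def entropyOf {Ω S : Type*} [MeasurableSpace Ω] [Fintype S]
    (μ : Measure Ω) (f : Ω → S) : ℝ :=
  ∑ x : S, Real.negMulLog (probOf μ f x)

/-- Conditional independence of discrete random variables:
`P(f = a, g = b, k = c) · P(k = c) = P(f = a, k = c) · P(g = b, k = c)` for all values. -/
def CondIndepRV {Ω A B C : Type*} [MeasurableSpace Ω] (μ : Measure Ω)
    (f : Ω → A) (g : Ω → B) (k : Ω → C) : Prop :=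
  ∀ (a : A) (b : B) (c : C),
    μ {ω | f ω = a ∧ g ω = b ∧ k ω = c} * μ {ω | k ω = c} =
    μ {ω | f ω = a ∧ k ω = c} * μ {ω | g ω = b ∧ k ω = c}

/-- Unconditional independence: the case of a constant conditioning variable. -/
def IndepRV {Ω A B : Type*} [MeasurableSpace Ω] (μ : Measure Ω)
    (f : Ω → A) (g : Ω → B) : Prop :=
  CondIndepRV μ f g (fun _ => ())

section CIHelpers

/-- Decomposing the measure of a set along the fibers of a discrete map. -/
lemma ci_meas_fiber {Ω T : Type*} [MeasurableSpace Ω] (μ : Measure Ω) [Fintype T]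
    [MeasurableSpace T] [MeasurableSingletonClass T] {h : Ω → T} (mh : Measurable h)
    {s : Set Ω} (ms : MeasurableSet s) : μ s = ∑ t : T, μ (s ∩ {ω | h ω = t}) := by
  have hu : ⋃ t ∈ (Finset.univ : Finset T), (s ∩ {ω | h ω = t}) = s := by
    ext ω; simp
  conv_lhs => rw [← hu]
  rw [measure_biUnion_finset]
  · intro t _ t' _ hne
    simp only [Function.onFun, Set.disjoint_left]
    rintro ω ⟨-, h1⟩ ⟨-, h2⟩
    exact hne (h1 ▸ h2 ▸ rfl)
  · exact fun t _ => ms.inter (mh (measurableSet_singleton t))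

/-- Real-valued version of `ci_meas_fiber`. -/
lemma ci_toReal_meas_fiber {Ω T : Type*} [MeasurableSpace Ω] (μ : Measure Ω)
    [IsFiniteMeasure μ] [Fintype T] [MeasurableSpace T] [MeasurableSingletonClass T]
    {h : Ω → T} (mh : Measurable h) {s : Set Ω} (ms : MeasurableSet s) :
    (μ s).toReal = ∑ t : T, (μ (s ∩ {ω | h ω = t})).toReal := by
  rw [ci_meas_fiber μ mh ms, ENNReal.toReal_sum (fun t _ => measure_ne_top μ _)]

/-- The purely algebraic core of the CI implication (I:13). -/
lemma ci_core {SX SY : Type*} [Fintype SX] [Fintype SY]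
    (t : SX → SY → ℝ) (fX gX : SX → ℝ) (fY gY : SY → ℝ) (c : ℝ)
    (hstar : ∀ x y, t x y * (fX x * fY y * c) = gX x * gY y)
    (hXz : ∀ x y, fX x = 0 → t x y = 0) (hgX : ∀ x, fX x = 0 → gX x = 0)
    (hYz : ∀ x y, fY y = 0 → t x y = 0) (hgY : ∀ y, fY y = 0 → gY y = 0)
    (x : SX) (y : SY) (hfx : 0 < fX x) (hfy : 0 < fY y) (hc : 0 < c) :
    t x y * (∑ x', ∑ y', t x' y') = (∑ y', t x y') * (∑ x', t x' y) := by
  set qX : SX → ℝ := fun x' => gX x' / fX x' with hqX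
  set qY : SY → ℝ := fun y' => gY y' / fY y' with hqY
  have lemA : ∀ (x' : SX) (y' : SY), 0 < fX x' → t x' y' * (fX x' * c) = gX x' * qY y' := by
    intro x' y' hx'
    by_cases hy' : fY y' = 0
    · simp [hYz x' y' hy', hqY, hgY y' hy']
    · apply mul_right_cancel₀ hy'
      calc t x' y' * (fX x' * c) * fY y' = t x' y' * (fX x' * fY y' * c) := by ring
        _ = gX x' * gY y' := hstar x' y'
        _ = gX x' * (qY y' * fY y') := by rw [hqY]; simp [div_mul_cancel₀ _ hy']
        _ = gX x' * qY y' * fY y' := by ring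
  have lemB : ∀ (x' : SX) (y' : SY), 0 < fY y' → t x' y' * (fY y' * c) = gY y' * qX x' := by
    intro x' y' hy'
    by_cases hx' : fX x' = 0
    · simp [hXz x' y' hx', hqX, hgX x' hx']
    · apply mul_right_cancel₀ hx'
      calc t x' y' * (fY y' * c) * fX x' = t x' y' * (fX x' * fY y' * c) := by ring
        _ = gX x' * gY y' := hstar x' y'
        _ = (qX x' * fX x') * gY y' := by rw [hqX]; simp [div_mul_cancel₀ _ hx']
        _ = gY y' * qX x' * fX x' := by ring
  have lemC : ∀ (x' : SX) (y' : SY), t x' y' * c = qX x' * qY y' := by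
    intro x' y'
    by_cases hx' : fX x' = 0
    · simp [hXz x' y' hx', hqX, hgX x' hx']
    · by_cases hy' : fY y' = 0
      · simp [hYz x' y' hy', hqY, hgY y' hy']
      · apply mul_right_cancel₀ hx'
        apply mul_right_cancel₀ hy'
        calc t x' y' * c * fX x' * fY y' = t x' y' * (fX x' * fY y' * c) := by ring
          _ = gX x' * gY y' := hstar x' y'
          _ = (qX x' * fX x') * (qY y' * fY y') := by
              rw [hqX, hqY]; simp [div_mul_cancel₀ _ hx', div_mul_cancel₀ _ hy']
          _ = qX x' * qY y' * fX x' * fY y' := by ring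
  have sA : (∑ y', t x y') * (fX x * c) = gX x * (∑ y', qY y') := by
    rw [Finset.sum_mul, Finset.mul_sum]
    exact Finset.sum_congr rfl fun y' _ => lemA x y' hfx
  have sB : (∑ x', t x' y) * (fY y * c) = gY y * (∑ x', qX x') := by
    rw [Finset.sum_mul, Finset.mul_sum]
    exact Finset.sum_congr rfl fun x' _ => lemB x' y hfy
  have sC : (∑ x', ∑ y', t x' y') * c = (∑ x', qX x') * (∑ y', qY y') := by
    rw [Finset.sum_mul, Finset.sum_mul]
    refine Finset.sum_congr rfl fun x' _ => ?_
    rw [Finset.sum_mul, Finset.mul_sum]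
    exact Finset.sum_congr rfl fun y' _ => lemC x' y'
  have key : (t x y * (∑ x', ∑ y', t x' y')) * (fX x * fY y * c * c)
      = ((∑ y', t x y') * (∑ x', t x' y)) * (fX x * fY y * c * c) := by
    calc (t x y * (∑ x', ∑ y', t x' y')) * (fX x * fY y * c * c)
        = (t x y * (fX x * fY y * c)) * ((∑ x', ∑ y', t x' y') * c) := by ring
      _ = (gX x * gY y) * ((∑ x', qX x') * (∑ y', qY y')) := by rw [hstar x y, sC]
      _ = (gX x * (∑ y', qY y')) * (gY y * (∑ x', qX x')) := by ring
      _ = ((∑ y', t x y') * (fX x * c)) * ((∑ x', t x' y) * (fY y * c)) := by rw [sA, sB]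
      _ = ((∑ y', t x y') * (∑ x', t x' y)) * (fX x * fY y * c * c) := by ring
  exact mul_right_cancel₀ (by positivity) key

end CIHelpers

/-- Statement: the CI implication (I:13) for four discrete random variables. -/
theorem ci_implication_I13
    {Ω : Type*} [MeasurableSpace Ω] (μ : Measure Ω) [IsProbabilityMeasure μ]
    {SX SY SZ SU : Type*}
    [Fintype SX] [Nonempty SX] [MeasurableSpace SX] [MeasurableSingletonClass SX]
    [Fintype SY] [Nonempty SY] [MeasurableSpace SY] [MeasurableSingletonClass SY]
    [Fintype SZ] [Nonempty SZ] [MeasurableSpace SZ] [MeasurableSingletonClass SZ]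
    [Fintype SU] [Nonempty SU] [MeasurableSpace SU] [MeasurableSingletonClass SU]
    (ξX : Ω → SX) (ξY : Ω → SY) (ξZ : Ω → SZ) (ξU : Ω → SU)
    (mX : Measurable ξX) (mY : Measurable ξY) (mZ : Measurable ξZ) (mU : Measurable ξU)
    (h1 : IndepRV μ ξX ξY) (h2 : CondIndepRV μ ξX ξY ξZ) (h3 : CondIndepRV μ ξX ξY ξU) (h4 : CondIndepRV μ ξZ ξU (fun ω => (ξX ω, ξY ω))) :
    CondIndepRV μ ξX ξY (fun ω => (ξZ ω, ξU ω)) := by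
  intro a b c
  obtain ⟨z, u⟩ := c
  -- pass to real-valued probabilities
  refine (ENNReal.toReal_eq_toReal_iff'
    (ENNReal.mul_ne_top (measure_ne_top μ _) (measure_ne_top μ _))
    (ENNReal.mul_ne_top (measure_ne_top μ _) (measure_ne_top μ _))).mp ?_
  rw [ENNReal.toReal_mul, ENNReal.toReal_mul]
  -- rewrite the pair-valued conditions as conjunctions
  have e1 : {ω | ξX ω = a ∧ ξY ω = b ∧ (fun ω => (ξZ ω, ξU ω)) ω = (z, u)}
      = {ω | ξX ω = a ∧ ξY ω = b ∧ ξZ ω = z ∧ ξU ω = u} := by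
    ext ω; simp only [Set.mem_setOf_eq, Prod.mk.injEq]
  have e2 : {ω | (fun ω => (ξZ ω, ξU ω)) ω = (z, u)} = {ω | ξZ ω = z ∧ ξU ω = u} := by
    ext ω; simp only [Set.mem_setOf_eq, Prod.mk.injEq]
  have e3 : {ω | ξX ω = a ∧ (fun ω => (ξZ ω, ξU ω)) ω = (z, u)}
      = {ω | ξX ω = a ∧ ξZ ω = z ∧ ξU ω = u} := by
    ext ω; simp only [Set.mem_setOf_eq, Prod.mk.injEq]
  have e4 : {ω | ξY ω = b ∧ (fun ω => (ξZ ω, ξU ω)) ω = (z, u)}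
      = {ω | ξY ω = b ∧ ξZ ω = z ∧ ξU ω = u} := by
    ext ω; simp only [Set.mem_setOf_eq, Prod.mk.injEq]
  rw [e1, e2, e3, e4]
  -- vanishing helper
  have mono0 : ∀ (s s' : Set Ω), s ⊆ s' → (μ s').toReal = 0 → (μ s).toReal = 0 := by
    intro s s' hss hz
    have h' : μ s' = 0 := by
      rcases (ENNReal.toReal_eq_zero_iff _).mp hz with h | h
      · exact h
      · exact absurd h (measure_ne_top μ s')
    have : μ s = 0 := le_antisymm (h' ▸ measure_mono hss) zero_le
    simp [this]
  -- degenerate cases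
  by_cases hX0 : (μ {ω | ξX ω = a}).toReal = 0
  · rw [mono0 {ω | ξX ω = a ∧ ξY ω = b ∧ ξZ ω = z ∧ ξU ω = u} {ω | ξX ω = a}
        (fun ω h => h.1) hX0,
      mono0 {ω | ξX ω = a ∧ ξZ ω = z ∧ ξU ω = u} {ω | ξX ω = a} (fun ω h => h.1) hX0,
      zero_mul, zero_mul]
  by_cases hY0 : (μ {ω | ξY ω = b}).toReal = 0
  · rw [mono0 {ω | ξX ω = a ∧ ξY ω = b ∧ ξZ ω = z ∧ ξU ω = u} {ω | ξY ω = b}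
        (fun ω h => h.2.1) hY0,
      mono0 {ω | ξY ω = b ∧ ξZ ω = z ∧ ξU ω = u} {ω | ξY ω = b} (fun ω h => h.1) hY0, zero_mul, mul_zero]
  by_cases hZ0 : (μ {ω | ξZ ω = z}).toReal = 0
  · rw [mono0 {ω | ξX ω = a ∧ ξY ω = b ∧ ξZ ω = z ∧ ξU ω = u} {ω | ξZ ω = z}
        (fun ω h => h.2.2.1) hZ0,
      mono0 {ω | ξX ω = a ∧ ξZ ω = z ∧ ξU ω = u} {ω | ξZ ω = z} (fun ω h => h.2.1) hZ0, zero_mul, zero_mul]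
  by_cases hU0 : (μ {ω | ξU ω = u}).toReal = 0
  · rw [mono0 {ω | ξX ω = a ∧ ξY ω = b ∧ ξZ ω = z ∧ ξU ω = u} {ω | ξU ω = u}
        (fun ω h => h.2.2.2) hU0,
      mono0 {ω | ξX ω = a ∧ ξZ ω = z ∧ ξU ω = u} {ω | ξU ω = u} (fun ω h => h.2.2) hU0, zero_mul, zero_mul]
  have hfx : 0 < (μ {ω | ξX ω = a}).toReal := lt_of_le_of_ne ENNReal.toReal_nonneg (Ne.symm hX0)
  have hfy : 0 < (μ {ω | ξY ω = b}).toReal := lt_of_le_of_ne ENNReal.toReal_nonneg (Ne.symm hY0)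
  have hfz : 0 < (μ {ω | ξZ ω = z}).toReal := lt_of_le_of_ne ENNReal.toReal_nonneg (Ne.symm hZ0)
  have hfu : 0 < (μ {ω | ξU ω = u}).toReal := lt_of_le_of_ne ENNReal.toReal_nonneg (Ne.symm hU0)
  -- measurability of the relevant sets
  have msXZU : ∀ a' : SX, MeasurableSet {ω | ξX ω = a' ∧ ξZ ω = z ∧ ξU ω = u} :=
    fun a' => (mX (measurableSet_singleton a')).inter
      ((mZ (measurableSet_singleton z)).inter (mU (measurableSet_singleton u)))
  have msYZU : ∀ b' : SY, MeasurableSet {ω | ξY ω = b' ∧ ξZ ω = z ∧ ξU ω = u} :=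
    fun b' => (mY (measurableSet_singleton b')).inter
      ((mZ (measurableSet_singleton z)).inter (mU (measurableSet_singleton u)))
  have msZU : MeasurableSet {ω | ξZ ω = z ∧ ξU ω = u} :=
    (mZ (measurableSet_singleton z)).inter (mU (measurableSet_singleton u))
  -- expressing the marginals as sums of atoms
  have sX : (μ {ω | ξX ω = a ∧ ξZ ω = z ∧ ξU ω = u}).toReal
      = ∑ b' : SY, (μ {ω | ξX ω = a ∧ ξY ω = b' ∧ ξZ ω = z ∧ ξU ω = u}).toReal := by
    rw [ci_toReal_meas_fiber μ mY (msXZU a)]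
    refine Finset.sum_congr rfl fun b' _ => ?_
    have hset : {ω | ξX ω = a ∧ ξZ ω = z ∧ ξU ω = u} ∩ {ω | ξY ω = b'}
        = {ω | ξX ω = a ∧ ξY ω = b' ∧ ξZ ω = z ∧ ξU ω = u} := by
      ext ω
      simp only [Set.mem_inter_iff, Set.mem_setOf_eq]
      tauto
    rw [hset]
  have sY : (μ {ω | ξY ω = b ∧ ξZ ω = z ∧ ξU ω = u}).toReal
      = ∑ a' : SX, (μ {ω | ξX ω = a' ∧ ξY ω = b ∧ ξZ ω = z ∧ ξU ω = u}).toReal := by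
    rw [ci_toReal_meas_fiber μ mX (msYZU b)]
    refine Finset.sum_congr rfl fun a' _ => ?_
    have hset : {ω | ξY ω = b ∧ ξZ ω = z ∧ ξU ω = u} ∩ {ω | ξX ω = a'}
        = {ω | ξX ω = a' ∧ ξY ω = b ∧ ξZ ω = z ∧ ξU ω = u} := by
      ext ω
      simp only [Set.mem_inter_iff, Set.mem_setOf_eq]
      tauto
    rw [hset]
  have sZU : (μ {ω | ξZ ω = z ∧ ξU ω = u}).toReal
      = ∑ a' : SX, ∑ b' : SY, (μ {ω | ξX ω = a' ∧ ξY ω = b' ∧ ξZ ω = z ∧ ξU ω = u}).toReal := by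
    rw [ci_toReal_meas_fiber μ mX msZU]
    refine Finset.sum_congr rfl fun a' _ => ?_
    have hset : {ω | ξZ ω = z ∧ ξU ω = u} ∩ {ω | ξX ω = a'}
        = {ω | ξX ω = a' ∧ ξZ ω = z ∧ ξU ω = u} := by
      ext ω
      simp only [Set.mem_inter_iff, Set.mem_setOf_eq]
      tauto
    rw [hset, ci_toReal_meas_fiber μ mY (msXZU a')]
    refine Finset.sum_congr rfl fun b' _ => ?_
    have hset2 : {ω | ξX ω = a' ∧ ξZ ω = z ∧ ξU ω = u} ∩ {ω | ξY ω = b'}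
        = {ω | ξX ω = a' ∧ ξY ω = b' ∧ ξZ ω = z ∧ ξU ω = u} := by
      ext ω
      simp only [Set.mem_inter_iff, Set.mem_setOf_eq]
      tauto
    rw [hset2]
  rw [sX, sY, sZU]
  -- real versions of the hypotheses
  have toR : ∀ {A B C D : Set Ω}, μ A * μ B = μ C * μ D →
      (μ A).toReal * (μ B).toReal = (μ C).toReal * (μ D).toReal := by
    intro A B C D h
    rw [← ENNReal.toReal_mul, ← ENNReal.toReal_mul, h]
  -- the star identity
  have hstar : ∀ (a' : SX) (b' : SY),
      (μ {ω | ξX ω = a' ∧ ξY ω = b' ∧ ξZ ω = z ∧ ξU ω = u}).toReal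
        * ((μ {ω | ξX ω = a'}).toReal * (μ {ω | ξY ω = b'}).toReal
          * ((μ {ω | ξZ ω = z}).toReal * (μ {ω | ξU ω = u}).toReal))
      = ((μ {ω | ξX ω = a' ∧ ξZ ω = z}).toReal * (μ {ω | ξX ω = a' ∧ ξU ω = u}).toReal)
        * ((μ {ω | ξY ω = b' ∧ ξZ ω = z}).toReal * (μ {ω | ξY ω = b' ∧ ξU ω = u}).toReal) := by
    intro a' b'
    -- r1 : P(X=a',Y=b') = P(X=a') * P(Y=b')
    have r1 : (μ {ω | ξX ω = a' ∧ ξY ω = b'}).toReal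
        = (μ {ω | ξX ω = a'}).toReal * (μ {ω | ξY ω = b'}).toReal := by
      have h := h1 a' b' ()
      have u1 : {ω | ξX ω = a' ∧ ξY ω = b' ∧ (fun _ : Ω => ()) ω = ()}
          = {ω | ξX ω = a' ∧ ξY ω = b'} := by ext ω; simp
      have u2 : {ω : Ω | (fun _ : Ω => ()) ω = ()} = Set.univ := by ext ω; simp
      have u3 : {ω | ξX ω = a' ∧ (fun _ : Ω => ()) ω = ()} = {ω | ξX ω = a'} := by
        ext ω; simp
      have u4 : {ω | ξY ω = b' ∧ (fun _ : Ω => ()) ω = ()} = {ω | ξY ω = b'} := by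
        ext ω; simp
      rw [u1, u2, u3, u4, measure_univ, mul_one] at h
      rw [h, ENNReal.toReal_mul]
    have r2 : (μ {ω | ξX ω = a' ∧ ξY ω = b' ∧ ξZ ω = z}).toReal * (μ {ω | ξZ ω = z}).toReal
        = (μ {ω | ξX ω = a' ∧ ξZ ω = z}).toReal * (μ {ω | ξY ω = b' ∧ ξZ ω = z}).toReal :=
      toR (h2 a' b' z)
    have r3 : (μ {ω | ξX ω = a' ∧ ξY ω = b' ∧ ξU ω = u}).toReal * (μ {ω | ξU ω = u}).toReal
        = (μ {ω | ξX ω = a' ∧ ξU ω = u}).toReal * (μ {ω | ξY ω = b' ∧ ξU ω = u}).toReal :=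
      toR (h3 a' b' u)
    have r4 : (μ {ω | ξX ω = a' ∧ ξY ω = b' ∧ ξZ ω = z ∧ ξU ω = u}).toReal
        * (μ {ω | ξX ω = a' ∧ ξY ω = b'}).toReal
        = (μ {ω | ξX ω = a' ∧ ξY ω = b' ∧ ξZ ω = z}).toReal
        * (μ {ω | ξX ω = a' ∧ ξY ω = b' ∧ ξU ω = u}).toReal := by
      have h := h4 z u (a', b')
      have v1 : {ω | ξZ ω = z ∧ ξU ω = u ∧ (fun ω => (ξX ω, ξY ω)) ω = (a', b')}
          = {ω | ξX ω = a' ∧ ξY ω = b' ∧ ξZ ω = z ∧ ξU ω = u} := by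
        ext ω; simp only [Set.mem_setOf_eq, Prod.mk.injEq]; tauto
      have v2 : {ω | (fun ω => (ξX ω, ξY ω)) ω = (a', b')}
          = {ω | ξX ω = a' ∧ ξY ω = b'} := by
        ext ω; simp only [Set.mem_setOf_eq, Prod.mk.injEq]
      have v3 : {ω | ξZ ω = z ∧ (fun ω => (ξX ω, ξY ω)) ω = (a', b')}
          = {ω | ξX ω = a' ∧ ξY ω = b' ∧ ξZ ω = z} := by
        ext ω; simp only [Set.mem_setOf_eq, Prod.mk.injEq]; tauto
      have v4 : {ω | ξU ω = u ∧ (fun ω => (ξX ω, ξY ω)) ω = (a', b')}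
          = {ω | ξX ω = a' ∧ ξY ω = b' ∧ ξU ω = u} := by
        ext ω; simp only [Set.mem_setOf_eq, Prod.mk.injEq]; tauto
      rw [v1, v2, v3, v4] at h
      exact toR h
    calc (μ {ω | ξX ω = a' ∧ ξY ω = b' ∧ ξZ ω = z ∧ ξU ω = u}).toReal
        * ((μ {ω | ξX ω = a'}).toReal * (μ {ω | ξY ω = b'}).toReal
          * ((μ {ω | ξZ ω = z}).toReal * (μ {ω | ξU ω = u}).toReal))
        = ((μ {ω | ξX ω = a' ∧ ξY ω = b' ∧ ξZ ω = z ∧ ξU ω = u}).toReal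
            * (μ {ω | ξX ω = a' ∧ ξY ω = b'}).toReal)
          * ((μ {ω | ξZ ω = z}).toReal * (μ {ω | ξU ω = u}).toReal) := by rw [r1]; ring
      _ = ((μ {ω | ξX ω = a' ∧ ξY ω = b' ∧ ξZ ω = z}).toReal
            * (μ {ω | ξX ω = a' ∧ ξY ω = b' ∧ ξU ω = u}).toReal)
          * ((μ {ω | ξZ ω = z}).toReal * (μ {ω | ξU ω = u}).toReal) := by rw [r4]
      _ = ((μ {ω | ξX ω = a' ∧ ξY ω = b' ∧ ξZ ω = z}).toReal * (μ {ω | ξZ ω = z}).toReal)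
          * ((μ {ω | ξX ω = a' ∧ ξY ω = b' ∧ ξU ω = u}).toReal
            * (μ {ω | ξU ω = u}).toReal) := by ring
      _ = ((μ {ω | ξX ω = a' ∧ ξZ ω = z}).toReal * (μ {ω | ξY ω = b' ∧ ξZ ω = z}).toReal)
          * ((μ {ω | ξX ω = a' ∧ ξU ω = u}).toReal
            * (μ {ω | ξY ω = b' ∧ ξU ω = u}).toReal) := by rw [r2, r3]
      _ = ((μ {ω | ξX ω = a' ∧ ξZ ω = z}).toReal * (μ {ω | ξX ω = a' ∧ ξU ω = u}).toReal)
          * ((μ {ω | ξY ω = b' ∧ ξZ ω = z}).toReal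
            * (μ {ω | ξY ω = b' ∧ ξU ω = u}).toReal) := by ring
  -- vanishing hypotheses for the core lemma
  have hXz : ∀ (a' : SX) (b' : SY), (μ {ω | ξX ω = a'}).toReal = 0 →
      (μ {ω | ξX ω = a' ∧ ξY ω = b' ∧ ξZ ω = z ∧ ξU ω = u}).toReal = 0 :=
    fun a' b' h => mono0 _ _ (fun ω hω => hω.1) h
  have hgX : ∀ a' : SX, (μ {ω | ξX ω = a'}).toReal = 0 →
      (μ {ω | ξX ω = a' ∧ ξZ ω = z}).toReal * (μ {ω | ξX ω = a' ∧ ξU ω = u}).toReal = 0 := by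
    intro a' h
    rw [mono0 {ω | ξX ω = a' ∧ ξZ ω = z} _ (fun ω hω => hω.1) h, zero_mul]
  have hYz : ∀ (a' : SX) (b' : SY), (μ {ω | ξY ω = b'}).toReal = 0 →
      (μ {ω | ξX ω = a' ∧ ξY ω = b' ∧ ξZ ω = z ∧ ξU ω = u}).toReal = 0 :=
    fun a' b' h => mono0 _ _ (fun ω hω => hω.2.1) h
  have hgY : ∀ b' : SY, (μ {ω | ξY ω = b'}).toReal = 0 →
      (μ {ω | ξY ω = b' ∧ ξZ ω = z}).toReal * (μ {ω | ξY ω = b' ∧ ξU ω = u}).toReal = 0 := by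
    intro b' h
    rw [mono0 {ω | ξY ω = b' ∧ ξZ ω = z} _ (fun ω hω => hω.1) h, zero_mul]
  exact ci_core
    (fun a' b' => (μ {ω | ξX ω = a' ∧ ξY ω = b' ∧ ξZ ω = z ∧ ξU ω = u}).toReal)
    (fun a' => (μ {ω | ξX ω = a'}).toReal)
    (fun a' => (μ {ω | ξX ω = a' ∧ ξZ ω = z}).toReal * (μ {ω | ξX ω = a' ∧ ξU ω = u}).toReal)
    (fun b' => (μ {ω | ξY ω = b'}).toReal)
    (fun b' => (μ {ω | ξY ω = b' ∧ ξZ ω = z}).toReal * (μ {ω | ξY ω = b' ∧ ξU ω = u}).toReal)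
    ((μ {ω | ξZ ω = z}).toReal * (μ {ω | ξU ω = u}).toReal)
    hstar hXz hgX hYz hgY a b hfx hfy (mul_pos hfz hfu)
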